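/- Let J(z) = H_L(x₁(z), z) be the value of H_L along the curve c₁, where x₁(z) = (3/4)(1 - L²/f(z)²)⁻¹. Then dJ/dz(z) = (2/3)·z·x₁(z)⁴·(1 - L²/ℒ(z)), where ℒ(z) = f(z)²/(1+3ν(z)²). In particular J is strictly increasing where ℒ(z) > L² and strictly decreasing where ℒ(z) < L². -/

import Mathlib

set_option maxHeartbeats 1000000


theorem stmt_17 (f ν : ℝ → ℝ) (L : ℝ) (hL : 0 < L)
    (hfpos : ∀ z : ℝ, 0 < z → 0 < f z)
    (hfdiff : ∀ z : ℝ, 0 < z → DifferentiableAt ℝ f z)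
    (hν : ∀ z : ℝ, 0 < z → z * deriv f z = f z * (ν z) ^ 2)
    (hνr : ∀ z : ℝ, 0 < z → 0 < (ν z) ^ 2 ∧ (ν z) ^ 2 < 1)
    (z : ℝ) (hz : 0 < z) (hfz : L < f z) :
    HasDerivAt
      (fun z : ℝ => ((3 / 4) / (1 - L ^ 2 / (f z) ^ 2)) ^ 4 * z ^ 2 *
        (L ^ 2 / (f z) ^ 2 - 1 + 1 / ((3 / 4) / (1 - L ^ 2 / (f z) ^ 2))))
      (2 / 3 * z * ((3 / 4) / (1 - L ^ 2 / (f z) ^ 2)) ^ 4 *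
        (1 - L ^ 2 / ((f z) ^ 2 / (1 + 3 * (ν z) ^ 2)))) z ∧
    (L ^ 2 < (f z) ^ 2 / (1 + 3 * (ν z) ^ 2) →
      0 < 2 / 3 * z * ((3 / 4) / (1 - L ^ 2 / (f z) ^ 2)) ^ 4 *
        (1 - L ^ 2 / ((f z) ^ 2 / (1 + 3 * (ν z) ^ 2)))) ∧
    ((f z) ^ 2 / (1 + 3 * (ν z) ^ 2) < L ^ 2 →
      2 / 3 * z * ((3 / 4) / (1 - L ^ 2 / (f z) ^ 2)) ^ 4 *
        (1 - L ^ 2 / ((f z) ^ 2 / (1 + 3 * (ν z) ^ 2))) < 0) := by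
  have hf0 : 0 < f z := hfpos z hz
  have hfzne : f z ≠ 0 := ne_of_gt hf0
  have hL2 : L ^ 2 < (f z) ^ 2 := by nlinarith
  have hu : 0 < 1 - L ^ 2 / (f z) ^ 2 := by
    rw [sub_pos, div_lt_one (by positivity)]; exact hL2
  have hune : (1 - L ^ 2 / (f z) ^ 2) ≠ 0 := ne_of_gt hu
  have hx1 : 0 < (3 / 4 : ℝ) / (1 - L ^ 2 / (f z) ^ 2) := by positivity
  have hνz := hνr z hz
  have hden : 0 < 1 + 3 * (ν z) ^ 2 := by nlinarith [hνz.1]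
  have hLcal : 0 < (f z) ^ 2 / (1 + 3 * (ν z) ^ 2) := by positivity
  have hf' : deriv f z = f z * (ν z) ^ 2 / z := by
    field_simp
    linarith [hν z hz]
  -- the derivative via the simplified form g w = 27/256 * w^2 * ((1 - L^2/(f w)^2)^3)⁻¹
  have h1 : HasDerivAt f (deriv f z) z := (hfdiff z hz).hasDerivAt
  have h2 : HasDerivAt (fun w => (f w) ^ 2) (2 * f z ^ 1 * deriv f z) z := h1.pow 2
  have h3 : HasDerivAt (fun w => ((f w) ^ 2)⁻¹)
      (-(2 * f z ^ 1 * deriv f z) / ((f z) ^ 2) ^ 2) z := h2.inv (by positivity)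
  have h4 : HasDerivAt (fun w => 1 - L ^ 2 * ((f w) ^ 2)⁻¹)
      (-(L ^ 2 * (-(2 * f z ^ 1 * deriv f z) / ((f z) ^ 2) ^ 2))) z :=
    (h3.const_mul (L ^ 2)).const_sub 1
  have hvalu : 1 - L ^ 2 * ((f z) ^ 2)⁻¹ = 1 - L ^ 2 / (f z) ^ 2 := by ring
  have h5 : HasDerivAt (fun w => (1 - L ^ 2 * ((f w) ^ 2)⁻¹) ^ 3)
      (3 * (1 - L ^ 2 * ((f z) ^ 2)⁻¹) ^ 2 *
        (-(L ^ 2 * (-(2 * f z ^ 1 * deriv f z) / ((f z) ^ 2) ^ 2)))) z := h4.pow 3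
  have h6 : HasDerivAt (fun w => ((1 - L ^ 2 * ((f w) ^ 2)⁻¹) ^ 3)⁻¹)
      (-(3 * (1 - L ^ 2 * ((f z) ^ 2)⁻¹) ^ 2 *
        (-(L ^ 2 * (-(2 * f z ^ 1 * deriv f z) / ((f z) ^ 2) ^ 2)))) /
        ((1 - L ^ 2 * ((f z) ^ 2)⁻¹) ^ 3) ^ 2) z := by
    refine h5.inv ?_
    rw [hvalu]; positivity
  have h7 : HasDerivAt (fun w : ℝ => 27 / 256 * w ^ 2) (27 / 256 * (2 * z ^ 1)) z :=
    (hasDerivAt_pow 2 z).const_mul (27 / 256)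
  have h8 := h7.mul h6
  -- eventual equality with the original function
  have hev : (fun w : ℝ => ((3 / 4) / (1 - L ^ 2 / (f w) ^ 2)) ^ 4 * w ^ 2 *
        (L ^ 2 / (f w) ^ 2 - 1 + 1 / ((3 / 4) / (1 - L ^ 2 / (f w) ^ 2))))
      =ᶠ[nhds z] (fun w => 27 / 256 * w ^ 2 * ((1 - L ^ 2 * ((f w) ^ 2)⁻¹) ^ 3)⁻¹) := by
    have hcont : ContinuousAt f z := (hfdiff z hz).continuousAt
    have hev1 : ∀ᶠ w in nhds z, L < f w :=
      continuousAt_const.eventually_lt hcont hfz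
    filter_upwards [hev1] with w hw
    have hfw : 0 < f w := lt_trans hL hw
    have hfwne : (f w) ≠ 0 := ne_of_gt hfw
    have huw : 0 < 1 - L ^ 2 / (f w) ^ 2 := by
      rw [sub_pos, div_lt_one (by positivity)]; nlinarith
    have huwne : (1 - L ^ 2 / (f w) ^ 2) ≠ 0 := ne_of_gt huw
    rw [show (1 - L ^ 2 * ((f w) ^ 2)⁻¹) = 1 - L ^ 2 / (f w) ^ 2 by ring,
      show L ^ 2 / (f w) ^ 2 - 1 = -(1 - L ^ 2 / (f w) ^ 2) by ring]
    generalize hgen : 1 - L ^ 2 / (f w) ^ 2 = u at huwne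
    field_simp
    ring
  have hJ : HasDerivAt
      (fun w : ℝ => ((3 / 4) / (1 - L ^ 2 / (f w) ^ 2)) ^ 4 * w ^ 2 *
        (L ^ 2 / (f w) ^ 2 - 1 + 1 / ((3 / 4) / (1 - L ^ 2 / (f w) ^ 2))))
      (2 / 3 * z * ((3 / 4) / (1 - L ^ 2 / (f z) ^ 2)) ^ 4 *
        (1 - L ^ 2 / ((f z) ^ 2 / (1 + 3 * (ν z) ^ 2)))) z := by
    have h9 := h8.congr_of_eventuallyEq hev
    refine h9.congr_deriv ?_
    rw [hf', show (1 - L ^ 2 * ((f z) ^ 2)⁻¹) = 1 - L ^ 2 / (f z) ^ 2 by ring]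
    have hL2u : L ^ 2 = (f z) ^ 2 * (1 - (1 - L ^ 2 / (f z) ^ 2)) := by
      field_simp
      ring
    rw [hL2u]
    generalize hgen : 1 - L ^ 2 / (f z) ^ 2 = u at hune
    field_simp
    ring
  refine ⟨hJ, ?_, ?_⟩
  · intro h
    have : 0 < 1 - L ^ 2 / ((f z) ^ 2 / (1 + 3 * (ν z) ^ 2)) := by
      rw [sub_pos, div_lt_one hLcal]; exact h
    positivity
  · intro h
    have h1' : 1 - L ^ 2 / ((f z) ^ 2 / (1 + 3 * (ν z) ^ 2)) < 0 := by
      rw [sub_neg, lt_div_iff₀ hLcal, one_mul]; exact h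
    have h2' : 0 < 2 / 3 * z * ((3 / 4) / (1 - L ^ 2 / (f z) ^ 2)) ^ 4 := by positivity
    nlinarith
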